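/- Let (W_t)_{t\ge 1} be a sequence of real M\times M matrices converging to W^* with c := \|W^*\|_2 < 1, let q \ge 0, and let (b_t)_{t\ge 1} in \mathbb{R}^M satisfy \|b_t\| \le q for all t. Then any sequence (g_t)_{t\ge 1} in \mathbb{R}^M satisfying g_{t+1} = b_t + W_t g_t for all t \ge 1 is bounded, and moreover \limsup_{T\to\infty} \|g_T\| \le q/(1-c). -/

import Mathlib

open Matrix Filter Topology

/-- The operator 2-norm (largest singular value) of a real matrix. -/
noncomputable def opNorm2 {m n : Type*} [Fintype m] [Fintype n] [DecidableEq n]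
    (A : Matrix m n ℝ) : ℝ :=
  ‖LinearMap.toContinuousLinearMap (Matrix.toEuclideanLin (𝕜 := ℝ) A)‖

/-- Euclidean norm of a real vector. -/
noncomputable def vnorm {n : Type*} [Fintype n] (v : n → ℝ) : ℝ :=
  Real.sqrt (∑ i, v i ^ 2)

lemma vnorm_eq {n : Type*} [Fintype n] (v : n → ℝ) :
    vnorm v = ‖(WithLp.equiv 2 (n → ℝ)).symm v‖ := by
  rw [EuclideanSpace.norm_eq, vnorm]
  congr 1
  refine Finset.sum_congr rfl fun i _ => ?_
  rw [WithLp.equiv_symm_apply, WithLp.ofLp_toLp, Real.norm_eq_abs, sq_abs]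

lemma vnorm_nonneg {n : Type*} [Fintype n] (v : n → ℝ) : 0 ≤ vnorm v := by
  rw [vnorm_eq]; exact norm_nonneg _

lemma vnorm_add {n : Type*} [Fintype n] (v w : n → ℝ) :
    vnorm (v + w) ≤ vnorm v + vnorm w := by
  simp only [vnorm_eq, WithLp.equiv_symm_apply, WithLp.toLp_add]
  exact norm_add_le _ _

lemma vnorm_mulVec {m n : Type*} [Fintype m] [Fintype n] [DecidableEq n]
    (A : Matrix m n ℝ) (v : n → ℝ) :
    vnorm (A.mulVec v) ≤ opNorm2 A * vnorm v := by
  rw [vnorm_eq, vnorm_eq]; simp only [WithLp.equiv_symm_apply]; rw [← Matrix.toEuclideanLin_apply_piLp_toLp]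
  exact (LinearMap.toContinuousLinearMap (Matrix.toEuclideanLin (𝕜 := ℝ) A)).le_opNorm _

lemma opNorm2_nonneg {m n : Type*} [Fintype m] [Fintype n] [DecidableEq n]
    (A : Matrix m n ℝ) : 0 ≤ opNorm2 A := norm_nonneg _

lemma opNorm2_continuous {m n : Type*} [Fintype m] [Fintype n] [DecidableEq n] :
    Continuous (opNorm2 (m := m) (n := n)) := by
  have : Continuous fun A : Matrix m n ℝ =>
      LinearMap.toContinuousLinearMap (Matrix.toEuclideanLin (𝕜 := ℝ) A) := by
    exact LinearMap.continuous_of_finiteDimensional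
      ((LinearMap.toContinuousLinearMap : _ ≃ₗ[ℝ] _).toLinearMap.comp
        (Matrix.toEuclideanLin (𝕜 := ℝ) (m := m) (n := n)).toLinearMap)
  exact continuous_norm.comp this

/-- if `W t → W*` with `c := ‖W*‖₂ < 1`, `q ≥ 0` and `‖b t‖ ≤ q` for all `t ≥ 1`,
then any sequence with `g (t+1) = b t + W t * g t` for `t ≥ 1` is bounded, with
`limsup ‖g T‖ ≤ q / (1 - c)`. -/
theorem perturbed_linear_recursion_bounded {M : ℕ}
    (W : ℕ → Matrix (Fin M) (Fin M) ℝ) (Wstar : Matrix (Fin M) (Fin M) ℝ)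
    (hconv : Tendsto W atTop (𝓝 Wstar)) (hc : opNorm2 Wstar < 1)
    (q : ℝ) (hq : 0 ≤ q) (b : ℕ → Fin M → ℝ) (hb : ∀ t, 1 ≤ t → vnorm (b t) ≤ q)
    (g : ℕ → Fin M → ℝ)
    (hg : ∀ t, 1 ≤ t → g (t + 1) = b t + (W t).mulVec (g t)) :
    (∃ C : ℝ, ∀ t, vnorm (g t) ≤ C) ∧
      Filter.limsup (fun T => vnorm (g T)) atTop ≤ q / (1 - opNorm2 Wstar) := by
  set c := opNorm2 Wstar with hcdef
  have hc0 : 0 ≤ c := opNorm2_nonneg _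
  have hWn : Tendsto (fun t => opNorm2 (W t)) atTop (𝓝 c) :=
    (opNorm2_continuous.tendsto Wstar).comp hconv
  set u : ℕ → ℝ := fun t => vnorm (g t) with hudef
  have hu0 : ∀ t, 0 ≤ u t := fun t => vnorm_nonneg _
  -- eventual bound on opNorm2 (W t) below any c' > c
  have hev : ∀ c', c < c' → ∃ T0, 1 ≤ T0 ∧ ∀ t, T0 ≤ t → opNorm2 (W t) ≤ c' := by
    intro c' hc'
    have := hWn.eventually (gt_mem_nhds hc')
    rw [eventually_atTop] at this
    obtain ⟨T, hT⟩ := this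
    exact ⟨max T 1, le_max_right _ _,
      fun t ht => (hT t (le_trans (le_max_left _ _) ht)).le⟩
  -- recursion bound
  have hrec : ∀ c', c < c' → ∀ T0, 1 ≤ T0 → (∀ t, T0 ≤ t → opNorm2 (W t) ≤ c') →
      ∀ t, T0 ≤ t → u (t + 1) ≤ q + c' * u t := by
    intro c' hc' T0 hT0 hWb t ht
    have h1t : 1 ≤ t := le_trans hT0 ht
    have : u (t + 1) ≤ vnorm (b t) + vnorm ((W t).mulVec (g t)) := by
      rw [hudef]; simp only; rw [hg t h1t]; exact vnorm_add _ _
    refine this.trans (add_le_add (hb t h1t) ?_)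
    refine (vnorm_mulVec _ _).trans ?_
    exact mul_le_mul_of_nonneg_right (hWb t ht) (vnorm_nonneg _)
  -- boundedness
  set c1 : ℝ := (c + 1) / 2 with hc1def
  have hcc1 : c < c1 := by rw [hc1def]; linarith
  have hc11 : c1 < 1 := by rw [hc1def]; linarith
  have hc10 : 0 < c1 := lt_of_le_of_lt hc0 hcc1
  obtain ⟨T0, hT01, hT0⟩ := hev c1 hcc1
  set D : ℝ := max (u T0) (q / (1 - c1)) with hDdef
  have hDq : q / (1 - c1) ≤ D := le_max_right _ _
  have hD0 : 0 ≤ D := le_trans (hu0 T0) (le_max_left _ _)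
  have hDstep : q + c1 * D ≤ D := by
    have h1c1 : (0:ℝ) < 1 - c1 := by linarith
    have : q ≤ (1 - c1) * D := by
      rw [← div_le_iff₀' h1c1] at *; exact hDq
    nlinarith
  have hbound : ∀ t, T0 ≤ t → u t ≤ D := by
    intro t ht
    induction t, ht using Nat.le_induction with
    | base => exact le_max_left _ _
    | succ n hn ih =>
      refine (hrec c1 hcc1 T0 hT01 hT0 n hn).trans ?_
      calc q + c1 * u n ≤ q + c1 * D := by nlinarith
        _ ≤ D := hDstep
  have hC : ∃ C : ℝ, ∀ t, u t ≤ C := by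
    refine ⟨max D ((Finset.range (T0 + 1)).sup' ⟨0, Finset.mem_range.2 (Nat.succ_pos _)⟩ u),
      fun t => ?_⟩
    rcases le_or_gt T0 t with h | h
    · exact le_trans (hbound t h) (le_max_left _ _)
    · exact le_trans (Finset.le_sup' u (Finset.mem_range.2 (by omega)))
        (le_max_right _ _)
  refine ⟨hC, ?_⟩
  -- limsup part
  obtain ⟨C, hCb⟩ := hC
  have hbddAbove : IsBoundedUnder (· ≤ ·) atTop u :=
    ⟨C, Filter.eventually_map.2 (Filter.Eventually.of_forall hCb)⟩
  have hbddBelow : IsBoundedUnder (· ≥ ·) atTop u :=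
    ⟨0, Filter.eventually_map.2 (Filter.Eventually.of_forall hu0)⟩
  set L : ℝ := limsup u atTop with hLdef
  have hL0 : 0 ≤ L := by
    refine le_limsup_of_frequently_le (Filter.Frequently.of_forall hu0) hbddAbove
  have key : ∀ c', c < c' → c' < 1 → L ≤ q + c' * L := by
    intro c' hcc' hc'1
    have hc'0 : 0 < c' := lt_of_le_of_lt hc0 hcc'
    obtain ⟨T1, hT11, hT1⟩ := hev c' hcc'
    refine le_of_forall_pos_le_add fun ε hε => ?_
    have hevu : ∀ᶠ t in atTop, u t < L + ε / c' := by
      refine Filter.eventually_lt_of_limsup_lt ?_ hbddAbove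
      rw [← hLdef]
      linarith [div_pos hε hc'0]
    rw [eventually_atTop] at hevu
    obtain ⟨T2, hT2⟩ := hevu
    have hshift : limsup (fun t => u (t + 1)) atTop = L :=
      Filter.limsup_nat_add u 1
    have hcob : IsCoboundedUnder (· ≤ ·) atTop (fun t => u (t + 1)) :=
      Filter.IsBoundedUnder.isCoboundedUnder_le
        ⟨0, Filter.eventually_map.2 (Filter.Eventually.of_forall fun t => hu0 _)⟩
    have hls : limsup (fun t => u (t + 1)) atTop ≤ q + c' * L + ε := by
      refine Filter.limsup_le_of_le hcob ?_
      filter_upwards [Filter.eventually_ge_atTop (max T1 T2)] with t ht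
      have h1 : u (t + 1) ≤ q + c' * u t :=
        hrec c' hcc' T1 hT11 hT1 t (le_trans (le_max_left _ _) ht)
      have h2 : u t < L + ε / c' := hT2 t (le_trans (le_max_right _ _) ht)
      have : c' * u t ≤ c' * (L + ε / c') := by nlinarith
      rw [mul_add, mul_div_cancel₀ _ (ne_of_gt hc'0)] at this
      linarith
    calc L = limsup (fun t => u (t + 1)) atTop := hshift.symm
      _ ≤ q + c' * L + ε := hls
  have hfin : L * (1 - c) ≤ q := by
    by_contra h
    push_neg at h
    have hLpos : 0 < L := by nlinarith
    set c' : ℝ := c + (L * (1 - c) - q) / (2 * L) with hc'def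
    have h1 : c < c' := by
      rw [hc'def]
      have : 0 < (L * (1 - c) - q) / (2 * L) := div_pos (by linarith) (by linarith)
      linarith
    have h2 : c' < 1 := by
      rw [hc'def]
      have : (L * (1 - c) - q) / (2 * L) ≤ (1 - c) / 2 := by
        rw [div_le_div_iff₀ (by linarith) (by norm_num)]
        nlinarith
      linarith
    have := key c' h1 h2
    rw [hc'def] at this
    have hd : (L * (1 - c) - q) / (2 * L) * L = (L * (1 - c) - q) / 2 := by
      field_simp
    nlinarith [this, hd]
  rw [le_div_iff₀ (by linarith : (0:ℝ) < 1 - c)]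
  exact hfin
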